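/- Let p, z ∈ ℂ with 0 < |p| < 1 and z ≠ 0, set q = p², and let m ∈ ℤ. Assume p^{m} z q^{k} ≠ 1 for every integer k ≥ 0 (so all denominators below are nonzero). Then (q·p^{|m|}·z^{−1}; q)_∞ / (p^{|m|}·z; q)_∞ = (−p^{−1} z)^{(|m|−m)/2} · (q·p^{m}·z^{−1}; q)_∞ / (p^{m}·z; q)_∞, where (|m|−m)/2 is a nonnegative integer and p^{m} denotes the integer power of p (possibly with negative exponent). -/

import Mathlib

open Finset

/-- The infinite q-Pochhammer symbol `(z; q)_∞ = ∏_{k=0}^∞ (1 - z q^k)`. -/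
noncomputable def qPoch (z q : ℂ) : ℂ := ∏' k : ℕ, (1 - z * q ^ k)

lemma hasProd_zero_of_eq_zero {f : ℕ → ℂ} {N : ℕ} (h : f N = 0) : HasProd f 0 := by
  have hev : ∀ᶠ s : Finset ℕ in Filter.atTop, ∏ b ∈ s, f b = 0 := by
    filter_upwards [Filter.eventually_ge_atTop ({N} : Finset ℕ)] with s hs
    exact Finset.prod_eq_zero (hs (Finset.mem_singleton_self N)) h
  exact (Filter.tendsto_congr' hev).mpr tendsto_const_nhds

lemma summable_log_one_sub {a q : ℂ} (hq : ‖q‖ < 1) :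
    Summable (fun k : ℕ => Complex.log (1 - a * q ^ k)) := by
  have hsum : Summable (fun k : ℕ => (3/2 : ℝ) * (‖a‖ * ‖q‖ ^ k)) :=
    ((summable_geometric_of_lt_one (norm_nonneg q) hq).mul_left ‖a‖).mul_left _
  apply Summable.of_norm_bounded_eventually_nat hsum
  have hto : Filter.Tendsto (fun k : ℕ => ‖a‖ * ‖q‖ ^ k) Filter.atTop (nhds 0) := by
    simpa using (tendsto_pow_atTop_nhds_zero_of_norm_lt_one (by simpa using hq)).const_mul ‖a‖
  filter_upwards [hto.eventually_le_const (by norm_num : (0:ℝ) < 1/2)] with k hk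
  have h2 : ‖-(a * q ^ k)‖ ≤ 1/2 := by simpa [norm_mul, norm_pow] using hk
  calc ‖Complex.log (1 - a * q ^ k)‖
      = ‖Complex.log (1 + -(a * q ^ k))‖ := by ring_nf
    _ ≤ (3/2) * ‖-(a * q ^ k)‖ := Complex.norm_log_one_add_half_le_self h2
    _ = 3/2 * (‖a‖ * ‖q‖ ^ k) := by simp [norm_mul, norm_pow]

lemma multipliable_one_sub (a q : ℂ) (hq : ‖q‖ < 1) :
    Multipliable (fun k : ℕ => 1 - a * q ^ k) := by
  by_cases h : ∃ N, 1 - a * q ^ N = 0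
  · obtain ⟨N, hN⟩ := h
    exact ⟨0, hasProd_zero_of_eq_zero hN⟩
  · push_neg at h
    exact Complex.multipliable_of_summable_log (summable_log_one_sub hq)

lemma qPoch_shift (a q : ℂ) (hq : ‖q‖ < 1) (n : ℕ) :
    qPoch a q = (∏ j ∈ range n, (1 - a * q ^ j)) * qPoch (a * q ^ n) q := by
  unfold qPoch
  have hm : Multipliable (fun k : ℕ => (1 - a * q ^ (k + n))) := by
    apply (multipliable_one_sub (a * q ^ n) q hq).congr
    intro k
    rw [pow_add]; ring
  rw [← Multipliable.prod_mul_tprod_nat_mul' (f := fun k : ℕ => 1 - a * q ^ k) (k := n) hm]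
  congr 1
  apply tprod_congr
  intro k
  rw [pow_add]; ring

lemma sum_range_id_int (n : ℕ) : ((∑ j ∈ range n, j : ℕ) : ℤ) * 2 = (n:ℤ) * n - n := by
  induction n with
  | zero => simp
  | succ k ih =>
    rw [Finset.sum_range_succ]
    push_cast at ih ⊢
    linear_combination ih

lemma key_prod (p z : ℂ) (hp : p ≠ 0) (hz : z ≠ 0) (n : ℕ) :
    (-p⁻¹ * z) ^ n *
      ∏ j ∈ range n, (1 - p ^ 2 * p ^ (-(n:ℤ)) * z⁻¹ * (p ^ 2) ^ j)
    = ∏ j ∈ range n, (1 - p ^ (-(n:ℤ)) * z * (p ^ 2) ^ j) := by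
  have hzz : z * z⁻¹ = 1 := mul_inv_cancel₀ hz
  -- factorwise identity
  have hfact : ∀ j ∈ range n,
      (1 - p ^ 2 * p ^ (-(n:ℤ)) * z⁻¹ * (p ^ 2) ^ j)
        = (-(p ^ 2 * p ^ (-(n:ℤ)) * z⁻¹ * (p ^ 2) ^ j)) *
          (1 - p ^ (-(n:ℤ)) * z * (p ^ 2) ^ (n - 1 - j)) := by
    intro j hj
    have hj' : j < n := mem_range.mp hj
    have h1 : p ^ 2 * (p ^ 2) ^ j * (p ^ 2) ^ (n - 1 - j) *
        (p ^ (-(n:ℤ)) * p ^ (-(n:ℤ))) = 1 := by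
      have e : p ^ 2 * (p ^ 2) ^ j * (p ^ 2) ^ (n - 1 - j) = ((p:ℂ) ^ 2) ^ n := by
        rw [mul_assoc, ← pow_add, ← pow_succ']
        congr 1
        omega
      rw [e, ← pow_mul, ← zpow_add₀ hp,
        show (-(n:ℤ) + -(n:ℤ)) = -((2*n : ℕ) : ℤ) by push_cast; ring,
        zpow_neg, zpow_natCast, mul_inv_cancel₀ (pow_ne_zero _ hp)]
    linear_combination -hzz - z⁻¹ * z * h1
  rw [prod_congr rfl hfact, prod_mul_distrib]
  have hrefl : (∏ j ∈ range n, (1 - p ^ (-(n:ℤ)) * z * (p ^ 2) ^ (n - 1 - j)))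
      = ∏ j ∈ range n, (1 - p ^ (-(n:ℤ)) * z * (p ^ 2) ^ j) :=
    Finset.prod_range_reflect (fun j => 1 - p ^ (-(n:ℤ)) * z * (p ^ 2) ^ j) n
  rw [hrefl]
  -- scalar part is 1
  have hC : (-p⁻¹ * z) * (-(p ^ 2 * p ^ (-(n:ℤ)) * z⁻¹)) = p ^ ((1:ℤ) - n) := by
    have hpp : p⁻¹ * p ^ 2 = p := by field_simp
    rw [show ((1:ℤ) - n) = 1 + -(n:ℤ) by ring, zpow_add₀ hp, zpow_one]
    linear_combination p⁻¹ * p ^ 2 * p ^ (-(n:ℤ)) * hzz + p ^ (-(n:ℤ)) * hpp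
  have hsplit : ∀ j : ℕ, (-(p ^ 2 * p ^ (-(n:ℤ)) * z⁻¹ * (p ^ 2) ^ j))
      = (-(p ^ 2 * p ^ (-(n:ℤ)) * z⁻¹)) * (p ^ 2) ^ j := fun j => by ring
  have hS := sum_range_id_int n
  have hscal : (-p⁻¹ * z) ^ n *
      ∏ j ∈ range n, (-(p ^ 2 * p ^ (-(n:ℤ)) * z⁻¹ * (p ^ 2) ^ j)) = 1 := by
    simp only [hsplit]
    rw [prod_mul_distrib, prod_const, card_range, prod_pow_eq_pow_sum, ← mul_assoc, ← mul_pow, hC]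
    rw [show ((p:ℂ) ^ ((1:ℤ) - n)) ^ n = p ^ (((1:ℤ) - n) * n) by
          rw [← zpow_natCast _ n, ← zpow_mul],
        show ((p:ℂ) ^ 2) ^ (∑ j ∈ range n, j) = p ^ ((2 * (∑ j ∈ range n, j) : ℕ) : ℤ) by
          rw [← pow_mul, zpow_natCast],
        ← zpow_add₀ hp, ← zpow_zero p]
    congr 1
    push_cast at hS ⊢
    linear_combination hS
  calc (-p⁻¹ * z) ^ n *
        ((∏ j ∈ range n, (-(p ^ 2 * p ^ (-(n:ℤ)) * z⁻¹ * (p ^ 2) ^ j))) *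
          ∏ j ∈ range n, (1 - p ^ (-(n:ℤ)) * z * (p ^ 2) ^ j))
      = ((-p⁻¹ * z) ^ n *
          ∏ j ∈ range n, (-(p ^ 2 * p ^ (-(n:ℤ)) * z⁻¹ * (p ^ 2) ^ j))) *
          ∏ j ∈ range n, (1 - p ^ (-(n:ℤ)) * z * (p ^ 2) ^ j) := by ring
    _ = _ := by rw [hscal, one_mul]

/-- The Dimofte–Gaiotto–Gukov identity used to eliminate absolute values:
`(q^{1+|m|/2}/z;q)_∞ / (q^{|m|/2} z;q)_∞
  = (−q^{−1/2} z)^{(|m|−m)/2} (q^{1+m/2}/z;q)_∞ / (q^{m/2} z;q)_∞`,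
with half-powers of `q` interpreted via a fixed square root `p`, `p² = q`. -/
theorem abs_elimination (p q z : ℂ) (m : ℤ)
    (hp0 : 0 < ‖p‖) (hp1 : ‖p‖ < 1)
    (hq : q = p ^ 2) (hz : z ≠ 0)
    (hden : ∀ k : ℕ, p ^ m * z * q ^ k ≠ 1) :
    qPoch (q * p ^ |m| * z⁻¹) q / qPoch (p ^ |m| * z) q
      = (-p⁻¹ * z) ^ ((|m| - m) / 2) *
        (qPoch (q * p ^ m * z⁻¹) q / qPoch (p ^ m * z) q) := by
  have hp : p ≠ 0 := by
    intro h; simp [h] at hp0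
  subst hq
  rcases le_or_gt 0 m with hm | hm
  · rw [abs_of_nonneg hm]
    simp
  · obtain ⟨n, rfl⟩ : ∃ n : ℕ, m = -(n:ℤ) := ⟨(-m).toNat, by omega⟩
    have habs : |(-(n:ℤ))| = (n:ℤ) := by simp
    have hqnorm : ‖(p:ℂ) ^ 2‖ < 1 := by
      rw [norm_pow]
      exact pow_lt_one₀ (norm_nonneg p) hp1 (by norm_num)
    have hexp : (|(-(n:ℤ))| - -(n:ℤ)) / 2 = (n:ℤ) := by rw [habs]; omega
    have hsplitpow : p ^ |(-(n:ℤ))| = p ^ (-(n:ℤ)) * (p ^ 2) ^ n := by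
      rw [habs, show ((p:ℂ) ^ 2) ^ n = p ^ (((2*n : ℕ)):ℤ) by rw [← pow_mul, zpow_natCast],
        ← zpow_add₀ hp]
      congr 1
      push_cast
      omega
    have ha1 : p ^ 2 * p ^ |(-(n:ℤ))| * z⁻¹ = (p ^ 2 * p ^ (-(n:ℤ)) * z⁻¹) * (p ^ 2) ^ n := by
      rw [hsplitpow]; ring
    have ha2 : p ^ |(-(n:ℤ))| * z = (p ^ (-(n:ℤ)) * z) * (p ^ 2) ^ n := by
      rw [hsplitpow]; ring
    rw [ha1, ha2, hexp, zpow_natCast,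
      qPoch_shift (p ^ 2 * p ^ (-(n:ℤ)) * z⁻¹) (p ^ 2) hqnorm n,
      qPoch_shift (p ^ (-(n:ℤ)) * z) (p ^ 2) hqnorm n]
    have hP2ne : (∏ j ∈ range n, (1 - p ^ (-(n:ℤ)) * z * (p ^ 2) ^ j)) ≠ 0 := by
      apply Finset.prod_ne_zero_iff.mpr
      intro j _
      exact sub_ne_zero.mpr (Ne.symm (hden j))
    have hkey := key_prod p z hp hz n
    set A := qPoch (p ^ 2 * p ^ (-(n:ℤ)) * z⁻¹ * (p ^ 2) ^ n) (p ^ 2)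
    set B := qPoch (p ^ (-(n:ℤ)) * z * (p ^ 2) ^ n) (p ^ 2)
    set P1 := ∏ j ∈ range n, (1 - p ^ 2 * p ^ (-(n:ℤ)) * z⁻¹ * (p ^ 2) ^ j)
    set P2 := ∏ j ∈ range n, (1 - p ^ (-(n:ℤ)) * z * (p ^ 2) ^ j)
    have h3 : (-p⁻¹ * z) ^ n * (P1 * A / (P2 * B)) =
        ((-p⁻¹ * z) ^ n * P1) * A / (P2 * B) := by ring
    rw [h3, hkey]
    exact (mul_div_mul_left _ _ hP2ne).symm
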